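/- Let (y^k, z^k, x^k)_{k≥0} be an sPADMM sequence with τ > 0 and, for k ≥ 1, set ψ_{k+1} := ⟨A* y^{k+1} + B* z^{k+1} − c, B*(z^{k+1} − z^k)⟩. Then for every k ≥ 1: βψ_{k+1} + ‖z^{k+1} − z^k‖²_{Σ_{φg}} ≤ (max(1−τ, 1−τ^{-1})β/2)·‖A* y^k + B* z^k − c‖² − (1/2)‖z^{k+1} − z^k‖²_{T₀} + (max(1−τ, (τ−1)τ)β/2)·‖B*(z^{k+1} − z^k)‖² + (1/2)‖z^k − z^{k−1}‖²_{T₀}. -/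

import Mathlib

open scoped RealInnerProductSpace

noncomputable section

lemma cross_bound (τ β a b ip : ℝ) (hβ : 0 < β) (hτ : 0 < τ) (hip : |ip| ≤ a * b) :
    (1 - τ) * β * ip ≤ max (1 - τ) (1 - τ⁻¹) * β / 2 * a ^ 2
      + max (1 - τ) ((τ - 1) * τ) * β / 2 * b ^ 2 := by
  obtain ⟨hip1, hip2⟩ := abs_le.mp hip
  rcases le_or_gt τ 1 with h1 | h1
  · have hinv : 1 ≤ τ⁻¹ := (one_le_inv₀ hτ).mpr h1
    have hm1 : max (1 - τ) (1 - τ⁻¹) = 1 - τ := max_eq_left (by linarith)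
    have hm2 : max (1 - τ) ((τ - 1) * τ) = 1 - τ := max_eq_left (by nlinarith)
    rw [hm1, hm2]
    have h2 : 0 ≤ (1 - τ) * β * (a * b - ip) := by
      apply mul_nonneg (mul_nonneg (by linarith) hβ.le); linarith
    nlinarith [mul_nonneg (mul_nonneg (sub_nonneg.mpr h1) hβ.le) (sq_nonneg (a - b)), h2]
  · have hinv : τ⁻¹ < 1 := inv_lt_one_of_one_lt₀ h1
    have hm1 : max (1 - τ) (1 - τ⁻¹) = 1 - τ⁻¹ := max_eq_right (by linarith)
    have hm2 : max (1 - τ) ((τ - 1) * τ) = (τ - 1) * τ := max_eq_right (by nlinarith)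
    rw [hm1, hm2]
    have h2 : 0 ≤ (τ - 1) * β * (a * b + ip) := by
      apply mul_nonneg (mul_nonneg (by linarith) hβ.le); linarith
    have h3 : 0 ≤ (τ - 1) * β * (a - τ * b) ^ 2 :=
      mul_nonneg (mul_nonneg (by linarith) hβ.le) (sq_nonneg _)
    have e1 : (1 - τ⁻¹) * β / 2 * a ^ 2 * τ = (τ - 1) * β / 2 * a ^ 2 := by
      field_simp
    have h : (1 - τ) * β * ip * τ
        ≤ ((1 - τ⁻¹) * β / 2 * a ^ 2 + (τ - 1) * τ * β / 2 * b ^ 2) * τ := by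
      nlinarith [h3, mul_nonneg h2 hτ.le, e1]
    exact le_of_mul_le_mul_right h hτ


/-- The subdifferential of a function `f : Y → ℝ ∪ {+∞}` (encoded with values in `EReal`). -/
def subdiff {Y : Type*} [NormedAddCommGroup Y] [InnerProductSpace ℝ Y]
    (f : Y → EReal) (y : Y) : Set Y :=
  {ξ | ∀ y', f y + ((⟪ξ, y' - y⟫ : ℝ) : EReal) ≤ f y'}

theorem sPADMM_psi_bound
    {Y Z X : Type*}
    [NormedAddCommGroup Y] [InnerProductSpace ℝ Y] [FiniteDimensional ℝ Y]
    [NormedAddCommGroup Z] [InnerProductSpace ℝ Z] [FiniteDimensional ℝ Z]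
    [NormedAddCommGroup X] [InnerProductSpace ℝ X] [FiniteDimensional ℝ X]
    (ϑf : Y → EReal) (φg : Z → EReal)
    (hϑbot : ∀ v, ϑf v ≠ ⊥) (hϑproper : ∃ v, ϑf v ≠ ⊤)
    (hϑlsc : LowerSemicontinuous ϑf)
    (hϑconvex : ∀ (v v' : Y) (a b : ℝ), 0 ≤ a → 0 ≤ b → a + b = 1 →
      ϑf (a • v + b • v') ≤ (a : EReal) * ϑf v + (b : EReal) * ϑf v')
    (hφbot : ∀ v, φg v ≠ ⊥) (hφproper : ∃ v, φg v ≠ ⊤)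
    (hφlsc : LowerSemicontinuous φg)
    (hφconvex : ∀ (v v' : Z) (a b : ℝ), 0 ≤ a → 0 ≤ b → a + b = 1 →
      φg (a • v + b • v') ≤ (a : EReal) * φg v + (b : EReal) * φg v')
    (A : X →ₗ[ℝ] Y) (B : X →ₗ[ℝ] Z) (c : X)
    (β τ : ℝ) (hβ : 0 < β) (hτ : 0 < τ)
    (S : Y →ₗ[ℝ] Y) (hSsym : LinearMap.IsSymmetric S) (hSpsd : ∀ v, 0 ≤ ⟪S v, v⟫)
    (T₀ : Z →ₗ[ℝ] Z) (hTsym : LinearMap.IsSymmetric T₀) (hTpsd : ∀ v, 0 ≤ ⟪T₀ v, v⟫)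
    (SigZ : Z →ₗ[ℝ] Z) (hSigZsym : LinearMap.IsSymmetric SigZ)
    (hSigZpsd : ∀ v, 0 ≤ ⟪SigZ v, v⟫)
    (hSigZmono : ∀ (z₁ z₂ η₁ η₂ : Z), η₁ ∈ subdiff φg z₁ → η₂ ∈ subdiff φg z₂ →
      ⟪z₁ - z₂, SigZ (z₁ - z₂)⟫ ≤ ⟪η₁ - η₂, z₁ - z₂⟫)
    (y : ℕ → Y) (z : ℕ → Z) (x : ℕ → X)
    (hADMMy : ∀ k : ℕ,
      -(A (x k)) - β • A (LinearMap.adjoint A (y (k+1)) + LinearMap.adjoint B (z k) - c)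
        - S (y (k+1) - y k) ∈ subdiff ϑf (y (k+1)))
    (hADMMz : ∀ k : ℕ,
      -(B (x k)) - β • B (LinearMap.adjoint A (y (k+1)) + LinearMap.adjoint B (z (k+1)) - c)
        - T₀ (z (k+1) - z k) ∈ subdiff φg (z (k+1)))
    (hADMMx : ∀ k : ℕ,
      x (k+1) = x k + (τ * β) • (LinearMap.adjoint A (y (k+1)) + LinearMap.adjoint B (z (k+1)) - c)) :
    ∀ k : ℕ, 1 ≤ k →
      β * ⟪LinearMap.adjoint A (y (k+1)) + LinearMap.adjoint B (z (k+1)) - c,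
          LinearMap.adjoint B (z (k+1) - z k)⟫
        + ⟪z (k+1) - z k, SigZ (z (k+1) - z k)⟫
      ≤ max (1 - τ) (1 - τ⁻¹) * β / 2 *
            ‖LinearMap.adjoint A (y k) + LinearMap.adjoint B (z k) - c‖ ^ 2
        - (1/2) * ⟪z (k+1) - z k, T₀ (z (k+1) - z k)⟫
        + max (1 - τ) ((τ - 1) * τ) * β / 2 * ‖LinearMap.adjoint B (z (k+1) - z k)‖ ^ 2
        + (1/2) * ⟪z k - z (k-1), T₀ (z k - z (k-1))⟫ := by
  intro k hk
  obtain ⟨j, rfl⟩ : ∃ j, k = j + 1 := ⟨k - 1, (Nat.succ_pred_eq_of_pos hk).symm⟩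
  simp only [Nat.add_sub_cancel]
  have hmono := hSigZmono (z (j+1+1)) (z (j+1)) _ _ (hADMMz (j+1)) (hADMMz j)
  have hx := hADMMx j
  set Δ : Z := z (j+1+1) - z (j+1) with hΔdef
  set Δ' : Z := z (j+1) - z j with hΔ'def
  set r1 : X := LinearMap.adjoint A (y (j+1+1)) + LinearMap.adjoint B (z (j+1+1)) - c with hr1def
  set r0 : X := LinearMap.adjoint A (y (j+1)) + LinearMap.adjoint B (z (j+1)) - c with hr0def
  set b : X := LinearMap.adjoint B Δ with hbdef
  have hE : ⟪(-(B (x (j+1))) - β • B r1 - T₀ Δ) - (-(B (x j)) - β • B r0 - T₀ Δ'), Δ⟫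
      = -(τ * β) * ⟪r0, b⟫ - β * ⟪r1, b⟫ + β * ⟪r0, b⟫ - ⟪T₀ Δ, Δ⟫ + ⟪T₀ Δ', Δ⟫ := by
    rw [hx]
    simp only [hbdef, map_add, map_sub, map_smul, inner_sub_left, inner_add_left,
      inner_neg_left, real_inner_smul_left, LinearMap.adjoint_inner_right, smul_smul]
    ring
  rw [hE] at hmono
  have key2 : 2 * ⟪T₀ Δ', Δ⟫ ≤ ⟪T₀ Δ, Δ⟫ + ⟪T₀ Δ', Δ'⟫ := by
    have h0 := hTpsd (Δ - Δ')
    have hsym : ⟪T₀ Δ, Δ'⟫ = ⟪T₀ Δ', Δ⟫ := by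
      rw [hTsym Δ Δ', real_inner_comm]
    simp only [map_sub, inner_sub_left, inner_sub_right] at h0
    linarith
  have key3 := cross_bound τ β ‖r0‖ ‖b‖ ⟪r0, b⟫ hβ hτ (abs_real_inner_le_norm r0 b)
  have c1 : ⟪Δ, T₀ Δ⟫ = ⟪T₀ Δ, Δ⟫ := real_inner_comm _ _
  have c2 : ⟪Δ', T₀ Δ'⟫ = ⟪T₀ Δ', Δ'⟫ := real_inner_comm _ _
  linarith
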